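/- For all integers m ≥ 1 and l with 0 ≤ l ≤ m, the quantity A_{l,m} := (l! · m! / 2^(m-l)) · Σ_{k=l}^{m} 2^k · C(2m-2k, m-k) · C(m+k, m) · C(k, l) is a positive integer. -/

import Mathlib

open Finset Nat

/-- The rational expression `A_{l,m} = (l! m! / 2^(m-l)) Σ_{k=l}^m 2^k C(2m-2k,m-k) C(m+k,m) C(k,l)`. -/
def Aq (l m : ℕ) : ℚ :=
  ((l.factorial * m.factorial : ℕ) : ℚ) / 2 ^ (m - l) *
    ∑ k ∈ Finset.Icc l m,
      (2 : ℚ) ^ k * ((2 * m - 2 * k).choose (m - k)) * ((m + k).choose m) * (k.choose l)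

lemma two_pow_mul_factorial_dvd (n : ℕ) : 2 ^ n * n.factorial ∣ (2 * n).factorial := by
  rcases n with _ | n
  · simp
  · have h1 : (2 * (n + 1)).factorial = (2 * (n + 1))‼ * (2 * n + 1)‼ := by
      have := Nat.factorial_eq_mul_doubleFactorial (2 * n + 1)
      have h2 : 2 * n + 1 + 1 = 2 * (n + 1) := by ring
      rwa [h2] at this
    rw [h1, Nat.doubleFactorial_two_mul]
    exact Dvd.intro _ rfl

lemma two_pow_dvd_fact_mul_central (n : ℕ) : 2 ^ n ∣ n.factorial * (2 * n).choose n := by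
  have key : (2 * n).choose n * n.factorial * n.factorial = (2 * n).factorial := by
    have := Nat.choose_mul_factorial_mul_factorial (show n ≤ 2 * n by omega)
    simpa [two_mul, Nat.add_sub_cancel] using this
  have h := two_pow_mul_factorial_dvd n
  rw [← key] at h
  have h' : n.factorial * 2 ^ n ∣ n.factorial * (n.factorial * (2 * n).choose n) := by
    have : (2 * n).choose n * n.factorial * n.factorial
        = n.factorial * (n.factorial * (2 * n).choose n) := by ring
    rw [this] at h
    calc n.factorial * 2 ^ n = 2 ^ n * n.factorial := by ring
    _ ∣ _ := h
  exact (Nat.mul_dvd_mul_iff_left n.factorial_pos).mp h'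

theorem A_is_positive_integer (m l : ℕ) (hm : 1 ≤ m) (hl : l ≤ m) :
    ∃ n : ℕ, 0 < n ∧ (n : ℚ) = Aq l m := by
  set S : ℕ := ∑ k ∈ Finset.Icc l m,
      2 ^ k * ((2 * m - 2 * k).choose (m - k)) * ((m + k).choose m) * (k.choose l) with hS
  -- divisibility: 2^m ∣ m! * S
  have hdvd : 2 ^ m ∣ m.factorial * S := by
    rw [hS, Finset.mul_sum]
    refine Finset.dvd_sum ?_
    intro k hk
    have hkm : k ≤ m := (Finset.mem_Icc.mp hk).2
    have heq : 2 * m - 2 * k = 2 * (m - k) := by omega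
    rw [heq]
    have h1 : 2 ^ (m - k) ∣ (m - k).factorial * (2 * (m - k)).choose (m - k) :=
      two_pow_dvd_fact_mul_central (m - k)
    have h2 : (m - k).factorial ∣ m.factorial :=
      Nat.factorial_dvd_factorial (Nat.sub_le m k)
    obtain ⟨c, hc⟩ := h2
    have h3 : 2 ^ m ∣ m.factorial * (2 ^ k * (2 * (m - k)).choose (m - k)) := by
      have : 2 ^ m = 2 ^ (m - k) * 2 ^ k := by
        rw [← pow_add]; congr 1; omega
      rw [this, hc]
      have : (m - k).factorial * c * (2 ^ k * (2 * (m - k)).choose (m - k))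
          = ((m - k).factorial * (2 * (m - k)).choose (m - k)) * (c * 2 ^ k) := by ring
      rw [this]
      calc 2 ^ (m - k) * 2 ^ k ∣ ((m - k).factorial * (2 * (m - k)).choose (m - k)) * 2 ^ k :=
            Nat.mul_dvd_mul_right h1 _
      _ ∣ _ := by
            rw [mul_comm c (2 ^ k)]
            exact ⟨c, by ring⟩
    calc 2 ^ m ∣ m.factorial * (2 ^ k * (2 * (m - k)).choose (m - k)) := h3
    _ ∣ m.factorial * (2 ^ k * (2 * (m - k)).choose (m - k) * ((m + k).choose m) * (k.choose l)) := by
          exact ⟨(m + k).choose m * k.choose l, by ring⟩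
  have hdvd2 : 2 ^ (m - l) ∣ l.factorial * (m.factorial * S) := by
    exact Dvd.dvd.mul_left ((pow_dvd_pow 2 (Nat.sub_le m l)).trans hdvd) _
  have hSpos : 0 < S := by
    rw [hS]
    refine Finset.sum_pos' (fun i _ => Nat.zero_le _) ⟨m, Finset.mem_Icc.mpr ⟨hl, le_refl m⟩, ?_⟩
    have : 2 * m - 2 * m = 0 := by omega
    rw [this, Nat.sub_self]
    simp only [Nat.choose_zero_right]
    have h1 : 0 < (m + m).choose m := Nat.choose_pos (by omega)
    have h2 : 0 < m.choose l := Nat.choose_pos hl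
    have h3 : 0 < 2 ^ m := Nat.pow_pos (n := m) (by norm_num)
    exact Nat.mul_pos (Nat.mul_pos (Nat.mul_pos h3 one_pos) h1) h2
  obtain ⟨n, hn⟩ := hdvd2
  refine ⟨n, ?_, ?_⟩
  · rcases Nat.eq_zero_or_pos n with h0 | h0
    · exfalso
      rw [h0, mul_zero] at hn
      have := Nat.mul_pos (Nat.mul_pos l.factorial_pos m.factorial_pos) hSpos
      rw [mul_assoc] at this
      omega
    · exact h0
  · have hcast : (l.factorial * (m.factorial * S) : ℚ) = 2 ^ (m - l) * n := by
      exact_mod_cast congrArg (Nat.cast : ℕ → ℚ) hn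
    have hSq : ((S : ℕ) : ℚ) = ∑ k ∈ Finset.Icc l m,
        (2 : ℚ) ^ k * ((2 * m - 2 * k).choose (m - k)) * ((m + k).choose m) * (k.choose l) := by
      rw [hS]
      push_cast
      rfl
    rw [Aq, ← hSq]
    have h2ne : (2 : ℚ) ^ (m - l) ≠ 0 := by positivity
    field_simp
    push_cast at hcast ⊢
    linarith [hcast]
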